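/- The area generating function of directed column-convex polyominoes is DC(q) = q(1-q)/(1 - 3q + q^2). Equivalently, the number of directed column-convex polyominoes of area n satisfies the recurrence implied by this rational function; its coefficients are the odd-indexed Fibonacci numbers. -/

import Mathlib

/-- The alphabet {a, c, ā, c̄}, encoded as a=0, c=1, ā=2, c̄=3. -/
abbrev DCCLetter := Fin 4

/-- The linear system of languages `L₁,…,L₄` (indexed by `0,…,3`) encoding
directed column-convex polyominoes cell by cell:
`L₁ = {ε}`, `L₂ = L₁c ∪ L₂a ∪ L₃a ∪ L₄c`, `L₃ = L₂c ∪ L₃c`, `L₄ = L₂ā ∪ L₃ā ∪ L₄a`. -/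
inductive DCCLang : Fin 4 → List DCCLetter → Prop
  | eps : DCCLang 0 []
  | l2a (w) : DCCLang 0 w → DCCLang 1 (w ++ [1])
  | l2b (w) : DCCLang 1 w → DCCLang 1 (w ++ [0])
  | l2c (w) : DCCLang 2 w → DCCLang 1 (w ++ [0])
  | l2d (w) : DCCLang 3 w → DCCLang 1 (w ++ [1])
  | l3a (w) : DCCLang 1 w → DCCLang 2 (w ++ [1])
  | l3b (w) : DCCLang 2 w → DCCLang 2 (w ++ [1])
  | l4a (w) : DCCLang 1 w → DCCLang 3 (w ++ [2])
  | l4b (w) : DCCLang 2 w → DCCLang 3 (w ++ [2])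
  | l4c (w) : DCCLang 3 w → DCCLang 3 (w ++ [0])

/-- Directed column-convex polyominoes of area `n` are in bijection with the
words of length `n` of `L₂ ∪ L₃`; this is their area generating function. -/
noncomputable def dccAreaGF : PowerSeries ℚ :=
  PowerSeries.mk fun n =>
    (Set.ncard {w : List DCCLetter | (DCCLang 1 w ∨ DCCLang 2 w) ∧ w.length = n} : ℚ)

/-! ### The deterministic automaton -/

def dccStep : Fin 4 → DCCLetter → Option (Fin 4)
  | 0, 1 => some 1
  | 1, 0 => some 1
  | 2, 0 => some 1
  | 3, 1 => some 1
  | 1, 1 => some 2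
  | 2, 1 => some 2
  | 1, 2 => some 3
  | 2, 2 => some 3
  | 3, 0 => some 3
  | _, _ => none

def dccRun (w : List DCCLetter) : Option (Fin 4) :=
  w.foldl (fun s l => s.bind (fun i => dccStep i l)) (some 0)

lemma dccRun_append (w : List DCCLetter) (l : DCCLetter) :
    dccRun (w ++ [l]) = (dccRun w).bind (fun i => dccStep i l) := by
  simp [dccRun, List.foldl_append]

lemma dccLang_iff (i : Fin 4) (w : List DCCLetter) :
    DCCLang i w ↔ dccRun w = some i := by
  constructor
  · intro h
    induction h with
    | eps => rfl
    | l2a w _ ih => rw [dccRun_append, ih]; rfl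
    | l2b w _ ih => rw [dccRun_append, ih]; rfl
    | l2c w _ ih => rw [dccRun_append, ih]; rfl
    | l2d w _ ih => rw [dccRun_append, ih]; rfl
    | l3a w _ ih => rw [dccRun_append, ih]; rfl
    | l3b w _ ih => rw [dccRun_append, ih]; rfl
    | l4a w _ ih => rw [dccRun_append, ih]; rfl
    | l4b w _ ih => rw [dccRun_append, ih]; rfl
    | l4c w _ ih => rw [dccRun_append, ih]; rfl
  · induction w using List.reverseRecOn generalizing i with
    | nil =>
      intro h
      simp only [dccRun, List.foldl_nil, Option.some.injEq] at h
      subst h; exact DCCLang.eps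
    | append_singleton w l ih =>
      intro h
      rw [dccRun_append] at h
      obtain ⟨j, hj, hs⟩ := Option.bind_eq_some_iff.mp h
      fin_cases j <;> fin_cases l <;>
        simp [dccStep] at hs <;>
        subst hs <;>
        first
          | exact DCCLang.l2a _ (ih _ hj)
          | exact DCCLang.l2b _ (ih _ hj)
          | exact DCCLang.l2c _ (ih _ hj)
          | exact DCCLang.l2d _ (ih _ hj)
          | exact DCCLang.l3a _ (ih _ hj)
          | exact DCCLang.l3b _ (ih _ hj)
          | exact DCCLang.l4a _ (ih _ hj)
          | exact DCCLang.l4b _ (ih _ hj)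
          | exact DCCLang.l4c _ (ih _ hj)

/-! ### Counting -/

noncomputable def dccS (i : Fin 4) (n : ℕ) : Set (List DCCLetter) :=
  {w | dccRun w = some i ∧ w.length = n}

lemma dccS_finite (i : Fin 4) (n : ℕ) : (dccS i n).Finite :=
  (List.finite_length_eq (Fin 4) n).subset fun _ h => h.2

noncomputable def dccF (i : Fin 4) (n : ℕ) : ℕ := (dccS i n).ncard

lemma concat_injective (l : DCCLetter) :
    Function.Injective (fun w : List DCCLetter => w ++ [l]) := by
  intro a b h; simpa using h

lemma ncard_image_concat (i : Fin 4) (n : ℕ) (l : DCCLetter) :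
    ((fun w => w ++ [l]) '' dccS i n).ncard = dccF i n :=
  Set.ncard_image_of_injective _ (concat_injective l)

lemma image_concat_finite (i : Fin 4) (n : ℕ) (l : DCCLetter) :
    ((fun w => w ++ [l]) '' dccS i n).Finite :=
  (dccS_finite i n).image _

lemma image_concat_disjoint {i j : Fin 4} {n : ℕ} {l m : DCCLetter} (h : (i, l) ≠ (j, m)) :
    Disjoint ((fun w => w ++ [l]) '' dccS i n) ((fun w => w ++ [m]) '' dccS j n) := by
  rw [Set.disjoint_left]
  rintro x ⟨a, ⟨ha, -⟩, rfl⟩ ⟨b, ⟨hb, -⟩, hab⟩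
  obtain ⟨rfl, hl⟩ := List.append_inj' hab rfl
  simp only [List.cons.injEq] at hl
  rw [ha] at hb
  exact h (by simp [hl.1, Option.some_injective _ hb])

lemma mem_dccS_concat {i j : Fin 4} {l : DCCLetter} (h : dccStep i l = some j) {n : ℕ}
    {w : List DCCLetter} (hw : w ∈ dccS i n) : w ++ [l] ∈ dccS j (n + 1) :=
  ⟨by rw [dccRun_append, hw.1]; exact h, by simp [hw.2]⟩

lemma dccS_zero_succ (n : ℕ) : dccS 0 (n + 1) = ∅ := by
  ext w
  simp only [Set.mem_empty_iff_false, iff_false]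
  rintro ⟨hrun, hlen⟩
  rcases List.eq_nil_or_concat w with rfl | ⟨w', l, rfl⟩
  · simp at hlen
  simp only [List.concat_eq_append] at hrun hlen
  rw [dccRun_append] at hrun
  obtain ⟨j, hj, hs⟩ := Option.bind_eq_some_iff.mp hrun
  fin_cases j <;> fin_cases l <;> simp only [dccStep, Option.some.injEq, reduceCtorEq] at hs <;>
    exact absurd hs (by decide)

lemma dccS_one_succ (n : ℕ) : dccS 1 (n + 1) =
    ((fun w => w ++ [1]) '' dccS 0 n ∪ (fun w => w ++ [0]) '' dccS 1 n) ∪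
      ((fun w => w ++ [0]) '' dccS 2 n ∪ (fun w => w ++ [1]) '' dccS 3 n) := by
  ext w
  constructor
  · rintro ⟨hrun, hlen⟩
    rcases List.eq_nil_or_concat w with rfl | ⟨w', l, rfl⟩
    · simp at hlen
    simp only [List.concat_eq_append] at hrun hlen ⊢
    rw [dccRun_append] at hrun
    obtain ⟨j, hj, hs⟩ := Option.bind_eq_some_iff.mp hrun
    have hlen' : w'.length = n := by simpa using hlen
    simp only [Set.mem_union]
    fin_cases j <;> fin_cases l <;>
      simp only [dccStep, Option.some.injEq, reduceCtorEq] at hs <;>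
      first
        | exact absurd hs (by decide)
        | exact Or.inl (Or.inl ⟨w', ⟨hj, hlen'⟩, rfl⟩)
        | exact Or.inl (Or.inr ⟨w', ⟨hj, hlen'⟩, rfl⟩)
        | exact Or.inr (Or.inl ⟨w', ⟨hj, hlen'⟩, rfl⟩)
        | exact Or.inr (Or.inr ⟨w', ⟨hj, hlen'⟩, rfl⟩)
  · rintro ((⟨w', hw, rfl⟩ | ⟨w', hw, rfl⟩) | (⟨w', hw, rfl⟩ | ⟨w', hw, rfl⟩)) <;>
      exact mem_dccS_concat (by decide) hw

lemma dccS_two_succ (n : ℕ) : dccS 2 (n + 1) =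
    (fun w => w ++ [1]) '' dccS 1 n ∪ (fun w => w ++ [1]) '' dccS 2 n := by
  ext w
  constructor
  · rintro ⟨hrun, hlen⟩
    rcases List.eq_nil_or_concat w with rfl | ⟨w', l, rfl⟩
    · simp at hlen
    simp only [List.concat_eq_append] at hrun hlen ⊢
    rw [dccRun_append] at hrun
    obtain ⟨j, hj, hs⟩ := Option.bind_eq_some_iff.mp hrun
    have hlen' : w'.length = n := by simpa using hlen
    simp only [Set.mem_union]
    fin_cases j <;> fin_cases l <;>
      simp only [dccStep, Option.some.injEq, reduceCtorEq] at hs <;>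
      first
        | exact absurd hs (by decide)
        | exact Or.inl ⟨w', ⟨hj, hlen'⟩, rfl⟩
        | exact Or.inr ⟨w', ⟨hj, hlen'⟩, rfl⟩
  · rintro (⟨w', hw, rfl⟩ | ⟨w', hw, rfl⟩) <;> exact mem_dccS_concat (by decide) hw

lemma dccS_three_succ (n : ℕ) : dccS 3 (n + 1) =
    ((fun w => w ++ [2]) '' dccS 1 n ∪ (fun w => w ++ [2]) '' dccS 2 n) ∪
      (fun w => w ++ [0]) '' dccS 3 n := by
  ext w
  constructor
  · rintro ⟨hrun, hlen⟩
    rcases List.eq_nil_or_concat w with rfl | ⟨w', l, rfl⟩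
    · simp at hlen
    simp only [List.concat_eq_append] at hrun hlen ⊢
    rw [dccRun_append] at hrun
    obtain ⟨j, hj, hs⟩ := Option.bind_eq_some_iff.mp hrun
    have hlen' : w'.length = n := by simpa using hlen
    simp only [Set.mem_union]
    fin_cases j <;> fin_cases l <;>
      simp only [dccStep, Option.some.injEq, reduceCtorEq] at hs <;>
      first
        | exact absurd hs (by decide)
        | exact Or.inl (Or.inl ⟨w', ⟨hj, hlen'⟩, rfl⟩)
        | exact Or.inl (Or.inr ⟨w', ⟨hj, hlen'⟩, rfl⟩)
        | exact Or.inr ⟨w', ⟨hj, hlen'⟩, rfl⟩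
  · rintro ((⟨w', hw, rfl⟩ | ⟨w', hw, rfl⟩) | ⟨w', hw, rfl⟩) <;> exact mem_dccS_concat (by decide) hw

lemma dccF_zero_succ (n : ℕ) : dccF 0 (n + 1) = 0 := by
  rw [dccF, dccS_zero_succ, Set.ncard_empty]

lemma dccF_one_succ (n : ℕ) :
    dccF 1 (n + 1) = dccF 0 n + dccF 1 n + dccF 2 n + dccF 3 n := by
  rw [dccF, dccS_one_succ,
    Set.ncard_union_eq
      (by
        apply Set.disjoint_union_left.mpr
        constructor <;> apply Set.disjoint_union_right.mpr <;>
          exact ⟨image_concat_disjoint (by decide), image_concat_disjoint (by decide)⟩)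
      ((image_concat_finite _ _ _).union (image_concat_finite _ _ _))
      ((image_concat_finite _ _ _).union (image_concat_finite _ _ _)),
    Set.ncard_union_eq (image_concat_disjoint (by decide)) (image_concat_finite _ _ _)
      (image_concat_finite _ _ _),
    Set.ncard_union_eq (image_concat_disjoint (by decide)) (image_concat_finite _ _ _)
      (image_concat_finite _ _ _),
    ncard_image_concat, ncard_image_concat, ncard_image_concat, ncard_image_concat]
  ring

lemma dccF_two_succ (n : ℕ) : dccF 2 (n + 1) = dccF 1 n + dccF 2 n := by
  rw [dccF, dccS_two_succ,
    Set.ncard_union_eq (image_concat_disjoint (by decide)) (image_concat_finite _ _ _)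
      (image_concat_finite _ _ _),
    ncard_image_concat, ncard_image_concat]

lemma dccF_three_succ (n : ℕ) :
    dccF 3 (n + 1) = dccF 1 n + dccF 2 n + dccF 3 n := by
  rw [dccF, dccS_three_succ,
    Set.ncard_union_eq
      (by
        apply Set.disjoint_union_left.mpr
        exact ⟨image_concat_disjoint (by decide), image_concat_disjoint (by decide)⟩)
      ((image_concat_finite _ _ _).union (image_concat_finite _ _ _))
      (image_concat_finite _ _ _),
    Set.ncard_union_eq (image_concat_disjoint (by decide)) (image_concat_finite _ _ _)
      (image_concat_finite _ _ _),
    ncard_image_concat, ncard_image_concat, ncard_image_concat]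

lemma dccF_zero_zero : dccF 0 0 = 1 := by
  have : dccS 0 0 = {[]} := by
    ext w
    constructor
    · rintro ⟨-, hlen⟩; simpa using List.length_eq_zero_iff.mp hlen
    · rintro rfl; exact ⟨rfl, rfl⟩
  rw [dccF, this, Set.ncard_singleton]

lemma dccS_zero_of_ne (i : Fin 4) (hi : i ≠ 0) : dccS i 0 = ∅ := by
  ext w
  simp only [Set.mem_empty_iff_false, iff_false]
  rintro ⟨hrun, hlen⟩
  rw [List.length_eq_zero_iff.mp hlen] at hrun
  exact hi (Option.some_injective _ hrun.symm)

/-! ### The combined count and its recurrence -/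

noncomputable def dccG (n : ℕ) : ℕ := dccF 1 n + dccF 2 n

lemma dccG_zero : dccG 0 = 0 := by
  rw [dccG, dccF, dccF, dccS_zero_of_ne 1 (by decide), dccS_zero_of_ne 2 (by decide)]
  simp

lemma dccF_three_zero : dccF 3 0 = 0 := by
  rw [dccF, dccS_zero_of_ne 3 (by decide)]; simp

lemma dccG_one : dccG 1 = 1 := by
  have h1 := dccF_one_succ 0
  have h2 := dccF_two_succ 0
  have h4 := dccF_zero_zero
  have h5 := dccF_three_zero
  have h6 : dccF 1 0 + dccF 2 0 = 0 := dccG_zero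
  norm_num at h1 h2
  rw [dccG]
  omega

lemma dccG_succ (n : ℕ) : dccG (n + 2) = 2 * dccG (n + 1) + dccF 3 (n + 1) := by
  have h1 := dccF_one_succ (n + 1)
  have h2 := dccF_two_succ (n + 1)
  have h0 := dccF_zero_succ n
  rw [show n + 1 + 1 = n + 2 from rfl] at h1 h2
  rw [dccG, dccG]
  omega

lemma dccG_rec (n : ℕ) : dccG (n + 3) + dccG (n + 1) = 3 * dccG (n + 2) := by
  have h1 := dccG_succ (n + 1)
  have h2 := dccG_succ n
  have h3 := dccF_three_succ (n + 1)
  have h4 : dccF 1 (n + 1) + dccF 2 (n + 1) = dccG (n + 1) := rfl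
  rw [show n + 1 + 2 = n + 3 from rfl] at h1
  rw [show n + 1 + 1 = n + 2 from rfl] at h1 h3
  omega

lemma dccG_two : dccG 2 = 2 := by
  have h1 := dccG_succ 0
  have h2 := dccG_one
  have h3 := dccF_three_succ 0
  have h5 := dccF_three_zero
  have h6 : dccF 1 0 + dccF 2 0 = 0 := dccG_zero
  norm_num at h1 h3
  omega

/-! ### Coefficients of the generating function -/

lemma dccAreaGF_coeff (n : ℕ) :
    (PowerSeries.coeff n) dccAreaGF = (dccG n : ℚ) := by
  rw [dccAreaGF, PowerSeries.coeff_mk]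
  congr 1
  have hset : {w : List DCCLetter | (DCCLang 1 w ∨ DCCLang 2 w) ∧ w.length = n} =
      dccS 1 n ∪ dccS 2 n := by
    ext w
    simp only [Set.mem_setOf_eq, dccS, Set.mem_union, dccLang_iff]
    tauto
  rw [hset, Set.ncard_union_eq ?hd (dccS_finite 1 n) (dccS_finite 2 n)]
  · rfl
  case hd =>
    rw [Set.disjoint_left]
    rintro w ⟨h1, -⟩ ⟨h2, -⟩
    rw [h1] at h2
    exact absurd (Option.some_injective _ h2) (by decide)

open PowerSeries in
lemma coeff_GF_mul_X (n : ℕ) :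
    (PowerSeries.coeff (n + 1)) (dccAreaGF * X) = (dccG n : ℚ) := by
  rw [coeff_succ_mul_X, dccAreaGF_coeff]

open PowerSeries in
/-- The area generating function of directed column-convex polyominoes is
`DC(q) = q(1-q)/(1 - 3q + q^2)`. -/
theorem dccAreaGF_eq :
    (1 - 3 * X + X ^ 2 : PowerSeries ℚ) * dccAreaGF = X * (1 - X) := by
  have hC : (C (3 : ℚ) : PowerSeries ℚ) = 3 := by
    simp [map_ofNat]
  have key : (1 - 3 * X + X ^ 2 : PowerSeries ℚ) * dccAreaGF =
      dccAreaGF - C (3 : ℚ) * (dccAreaGF * X) + dccAreaGF * X * X := by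
    rw [hC]; ring
  have hr : (X * (1 - X) : PowerSeries ℚ) = X - X ^ 2 := by ring
  rw [key, hr]
  ext n
  rw [map_add, map_sub, map_sub, coeff_C_mul]
  rcases n with _ | n
  · rw [coeff_zero_mul_X, coeff_zero_mul_X, dccAreaGF_coeff]
    simp [dccG_zero, coeff_X, coeff_X_pow]
  rcases n with _ | n
  · rw [coeff_succ_mul_X (φ := dccAreaGF * X), coeff_GF_mul_X, coeff_zero_mul_X,
      dccAreaGF_coeff]
    simp [dccG_zero, dccG_one, coeff_X, coeff_X_pow]
  rcases n with _ | n
  · rw [coeff_succ_mul_X (φ := dccAreaGF * X), coeff_GF_mul_X, coeff_GF_mul_X,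
      dccAreaGF_coeff]
    have e1 : (0 : ℕ) + 1 + 1 = 2 := rfl
    rw [e1]
    simp [dccG_zero, dccG_one, dccG_two, coeff_X, coeff_X_pow]
    norm_num
  · rw [coeff_succ_mul_X (φ := dccAreaGF * X), coeff_GF_mul_X, coeff_GF_mul_X,
      dccAreaGF_coeff]
    have hG := dccG_rec n
    rw [show n + 3 = n + 1 + 1 + 1 from rfl, show n + 2 = n + 1 + 1 from rfl] at hG
    have hGQ : ((dccG (n + 1 + 1 + 1) : ℚ)) + dccG (n + 1) = 3 * dccG (n + 1 + 1) := by
      exact_mod_cast congrArg (fun k : ℕ => (k : ℚ)) hG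
    rw [coeff_X, coeff_X_pow]
    simp only [if_neg (by omega : ¬ n + 1 + 1 + 1 = 1), if_neg (by omega : ¬ n + 1 + 1 + 1 = 2)]
    linarith
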